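/- If k ≥ 2 and 2k+1 ≤ n ≤ k³/2 + k²/2 + k + 2, then there exists a graph G of order n with minimum degree δ(G) ≥ k such that G is a proper spanning subgraph of N_k(n) and λ(G) > n - k - 2. -/

import Mathlib

open SimpleGraph Finset

/-- Spectral radius (largest adjacency eigenvalue) of a graph on `Fin n`. -/
noncomputable def specRad {n : ℕ} (G : SimpleGraph (Fin n)) : ℝ :=
  haveI := Classical.decRel G.Adj
  ⨆ i, (Matrix.IsHermitian.eigenvalues
    (by
      rw [Matrix.IsHermitian, Matrix.conjTranspose_eq_transpose_of_trivial]
      exact G.isSymm_adjMatrix : (G.adjMatrix ℝ).IsHermitian)) i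

/-- `M_k(n) = K_k ∨ (K_{n-2k} + K̄_k)`: vertices `0..k-1` are the independent set,
vertices `k..2k-1` their joint neighborhood, vertices `k..n-1` a clique. -/
def Mgraph (k n : ℕ) : SimpleGraph (Fin n) where
  Adj i j := i ≠ j ∧ ((k ≤ i.val ∧ k ≤ j.val) ∨
    (i.val < k ∧ k ≤ j.val ∧ j.val < 2 * k) ∨ (j.val < k ∧ k ≤ i.val ∧ i.val < 2 * k))
  symm := by constructor; intro i j h; exact ⟨h.1.symm, by tauto⟩
  loopless := by constructor; intro i h; exact h.1 rfl

instance (k n : ℕ) : DecidableRel (Mgraph k n).Adj := fun _ _ => instDecidableAnd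

/-- `L_k(n) = K_1 ∨ (K_{n-k-1} + K_k)`: a `K_{k+1}` on vertices `0..k` and a
`K_{n-k}` on vertices `k..n-1`, sharing the vertex `k`. -/
def Lgraph (k n : ℕ) : SimpleGraph (Fin n) where
  Adj i j := i ≠ j ∧ ((i.val ≤ k ∧ j.val ≤ k) ∨ (k ≤ i.val ∧ k ≤ j.val))
  symm := by constructor; intro i j h; exact ⟨h.1.symm, by tauto⟩
  loopless := by constructor; intro i h; exact h.1 rfl

instance (k n : ℕ) : DecidableRel (Lgraph k n).Adj := fun _ _ => instDecidableAnd

/-- `N_k(n) = K_k ∨ (K_{n-2k-1} + K̄_{k+1})`: vertices `0..k` are the independent set,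
vertices `k+1..2k` their joint neighborhood, vertices `k+1..n-1` a clique. -/
def Ngraph (k n : ℕ) : SimpleGraph (Fin n) where
  Adj i j := i ≠ j ∧ ((k + 1 ≤ i.val ∧ k + 1 ≤ j.val) ∨
    (i.val < k + 1 ∧ k + 1 ≤ j.val ∧ j.val < 2 * k + 1) ∨
    (j.val < k + 1 ∧ k + 1 ≤ i.val ∧ i.val < 2 * k + 1))
  symm := by constructor; intro i j h; exact ⟨h.1.symm, by tauto⟩
  loopless := by constructor; intro i h; exact h.1 rfl

instance (k n : ℕ) : DecidableRel (Ngraph k n).Adj := fun _ _ => instDecidableAnd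

/-- The disjoint union `K_a + K_{n-a}` on `Fin n`: vertices `0..a-1` form one clique,
vertices `a..n-1` the other. -/
def DUgraph (a n : ℕ) : SimpleGraph (Fin n) where
  Adj i j := i ≠ j ∧ ((i.val < a ∧ j.val < a) ∨ (a ≤ i.val ∧ a ≤ j.val))
  symm := by constructor; intro i j h; exact ⟨h.1.symm, by tauto⟩
  loopless := by constructor; intro i h; exact h.1 rfl

instance (a n : ℕ) : DecidableRel (DUgraph a n).Adj := fun _ _ => instDecidableAnd

/-- `G` has a Hamiltonian path. -/
def HasHamiltonianPath {V : Type*} [DecidableEq V] (G : SimpleGraph V) : Prop :=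
  ∃ (u v : V) (p : G.Walk u v), p.IsHamiltonian

/-- `G` is Hamiltonian-connected. -/
def HamiltonianConnected {V : Type*} [DecidableEq V] (G : SimpleGraph V) : Prop :=
  ∀ u v : V, u ≠ v → ∃ p : G.Walk u v, p.IsHamiltonian


open Matrix in
lemma rayleigh {m : ℕ} {A : Matrix (Fin m) (Fin m) ℝ} (hA : A.IsHermitian) (x : Fin m → ℝ) :
    x ⬝ᵥ (A *ᵥ x) ≤ (⨆ i, hA.eigenvalues i) * (x ⬝ᵥ x) := by
  set U : Matrix (Fin m) (Fin m) ℝ := (Matrix.IsHermitian.eigenvectorUnitary hA : Matrix (Fin m) (Fin m) ℝ) with hU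
  set y : Fin m → ℝ := Uᵀ *ᵥ x with hy
  have hsU : star U = Uᵀ := by
    rw [← Matrix.conjTranspose_eq_transpose_of_trivial]; rfl
  have hUU : U * Uᵀ = 1 := by
    rw [← hsU]; exact (Matrix.mem_unitaryGroup_iff).mp (Matrix.IsHermitian.eigenvectorUnitary hA).2
  have h2 : x ⬝ᵥ x = y ⬝ᵥ y := by
    rw [hy, Matrix.mulVec_transpose, ← Matrix.dotProduct_mulVec, ← Matrix.mulVec_transpose,
      Matrix.mulVec_mulVec, hUU, Matrix.one_mulVec]
  have h1 : x ⬝ᵥ (A *ᵥ x) = ∑ i, hA.eigenvalues i * (y i)^2 := by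
    conv_lhs => rw [Matrix.IsHermitian.spectral_theorem hA]
    rw [Unitary.conjStarAlgAut_apply]
    rw [hsU, ← Matrix.mulVec_mulVec, ← Matrix.mulVec_mulVec, Matrix.dotProduct_mulVec,
      ← Matrix.mulVec_transpose, ← hy]
    have hdiag : Matrix.diagonal (RCLike.ofReal ∘ hA.eigenvalues) = Matrix.diagonal hA.eigenvalues := by
      congr 1
    rw [hdiag]
    simp [dotProduct, Matrix.mulVec_diagonal, sq]
    ring_nf
    exact Finset.sum_congr rfl fun i _ => by ring
  rw [h1, h2]
  have hbdd : BddAbove (Set.range hA.eigenvalues) := Set.Finite.bddAbove (Set.finite_range _)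
  calc ∑ i, hA.eigenvalues i * (y i)^2 ≤ ∑ i, (⨆ j, hA.eigenvalues j) * (y i)^2 := by
        apply Finset.sum_le_sum; intro i _
        exact mul_le_mul_of_nonneg_right (le_ciSup hbdd i) (sq_nonneg _)
    _ = (⨆ i, hA.eigenvalues i) * (y ⬝ᵥ y) := by
        rw [← Finset.mul_sum]; congr 1; simp [dotProduct, sq]

/-- `Ngraph k n` with the edge between vertices `p` and `q` removed. -/
def Gg (k n p q : ℕ) : SimpleGraph (Fin n) where
  Adj i j := (Ngraph k n).Adj i j ∧ ¬(i.val = p ∧ j.val = q) ∧ ¬(i.val = q ∧ j.val = p)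
  symm := by
    constructor; intro i j h
    exact ⟨(Ngraph k n).symm.symm _ _ h.1, fun hc => h.2.2 ⟨hc.2, hc.1⟩, fun hc => h.2.1 ⟨hc.2, hc.1⟩⟩
  loopless := by constructor; intro i h; exact (Ngraph k n).loopless.irrefl i h.1

instance (k n p q : ℕ) : DecidableRel (Gg k n p q).Adj := fun _ _ => instDecidableAnd

lemma sum_val_eq {n : ℕ} (c : ℕ) (hc : c < n) (f : Fin n → ℝ) :
    (∑ j : Fin n, if (j : ℕ) = c then f j else 0) = f ⟨c, hc⟩ := by
  have h1 : (∑ j : Fin n, if (j:ℕ) = c then f j else 0)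
      = ∑ j : Fin n, if j = ⟨c,hc⟩ then f j else 0 :=
    Finset.sum_congr rfl fun j _ =>
      if_congr ⟨fun h => Fin.ext h, fun h => congrArg Fin.val h⟩ rfl rfl
  rw [h1, Finset.sum_ite_eq' Finset.univ (⟨c, hc⟩ : Fin n) f]
  simp

open Matrix in
set_option maxHeartbeats 1600000 in
lemma quadForm (k n p q : ℕ) (hp : k+1 ≤ p) (hpq : p < q) (hq : q < n) (x : Fin n → ℝ) :
    x ⬝ᵥ ((Gg k n p q).adjMatrix ℝ *ᵥ x) =
      2 * (∑ i : Fin n, if i.val < k+1 then x i else 0)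
        * (∑ i : Fin n, if k+1 ≤ i.val ∧ i.val < 2*k+1 then x i else 0)
      + (∑ i : Fin n, if k+1 ≤ i.val then x i else 0)^2
      - (∑ i : Fin n, if k+1 ≤ i.val then (x i)^2 else 0)
      - 2 * x ⟨p, lt_trans hpq hq⟩ * x ⟨q, hq⟩ := by
  have key : ∀ i j : Fin n,
      x i * ((Gg k n p q).adjMatrix ℝ i j * x j)
        + (if i = j then (if k+1 ≤ i.val then x i * x j else 0) else 0)
        + (if i.val = p ∧ j.val = q then x i * x j else 0)
        + (if i.val = q ∧ j.val = p then x i * x j else 0)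
      = (if i.val < k+1 then x i else 0) * (if k+1 ≤ j.val ∧ j.val < 2*k+1 then x j else 0)
        + (if k+1 ≤ i.val ∧ i.val < 2*k+1 then x i else 0) * (if j.val < k+1 then x j else 0)
        + (if k+1 ≤ i.val then x i else 0) * (if k+1 ≤ j.val then x j else 0) := by
    intro i j
    simp only [SimpleGraph.adjMatrix_apply, Gg, Ngraph, ne_eq, Fin.ext_iff]
    split_ifs <;> first | omega | ring
  have hp' : p < n := lt_trans hpq hq
  have big := Finset.sum_congr rfl fun i (_ : i ∈ Finset.univ) =>
    Finset.sum_congr rfl fun j (_ : j ∈ Finset.univ) => key i j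
  simp only [Finset.sum_add_distrib] at big
  have hA : (∑ i : Fin n, ∑ j : Fin n, x i * ((Gg k n p q).adjMatrix ℝ i j * x j))
      = x ⬝ᵥ ((Gg k n p q).adjMatrix ℝ *ᵥ x) := by
    simp [dotProduct, Matrix.mulVec, Finset.mul_sum]
  have hD : (∑ i : Fin n, ∑ j : Fin n,
        (if i = j then (if k+1 ≤ (i:ℕ) then x i * x j else 0) else 0))
      = ∑ i : Fin n, (if k+1 ≤ (i:ℕ) then (x i)^2 else 0) := by
    apply Finset.sum_congr rfl
    intro i _
    rw [Finset.sum_ite_eq]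
    simp [sq]
  have hP1 : (∑ i : Fin n, ∑ j : Fin n, (if (i:ℕ) = p ∧ (j:ℕ) = q then x i * x j else 0))
      = x ⟨p, hp'⟩ * x ⟨q, hq⟩ := by
    have h1 : ∀ i : Fin n, (∑ j : Fin n, if (i:ℕ) = p ∧ (j:ℕ) = q then x i * x j else 0)
        = (if (i:ℕ) = p then x i * x ⟨q, hq⟩ else 0) := by
      intro i
      by_cases hip : (i:ℕ) = p
      · simp only [hip, true_and]
        exact sum_val_eq q hq _
      · simp [hip]
    rw [Finset.sum_congr rfl fun i _ => h1 i]
    exact sum_val_eq p hp' _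
  have hP2 : (∑ i : Fin n, ∑ j : Fin n, (if (i:ℕ) = q ∧ (j:ℕ) = p then x i * x j else 0))
      = x ⟨q, hq⟩ * x ⟨p, hp'⟩ := by
    have h1 : ∀ i : Fin n, (∑ j : Fin n, if (i:ℕ) = q ∧ (j:ℕ) = p then x i * x j else 0)
        = (if (i:ℕ) = q then x i * x ⟨p, hp'⟩ else 0) := by
      intro i
      by_cases hiq : (i:ℕ) = q
      · simp only [hiq, true_and]
        exact sum_val_eq p hp' _
      · simp [hiq]
    rw [Finset.sum_congr rfl fun i _ => h1 i]
    exact sum_val_eq q hq _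
  rw [hA, hD, hP1, hP2, ← Finset.sum_mul_sum, ← Finset.sum_mul_sum, ← Finset.sum_mul_sum] at big
  rw [sq]
  linarith [big]

lemma adjCongr {n : ℕ} (G : SimpleGraph (Fin n)) (i1 i2 : DecidableRel G.Adj) :
    @SimpleGraph.adjMatrix ℝ (Fin n) G i1 _ _ = @SimpleGraph.adjMatrix ℝ (Fin n) G i2 _ _ := by
  ext i j
  by_cases h : G.Adj i j <;> simp [SimpleGraph.adjMatrix, Matrix.of_apply, h]

lemma sum_ind {n : ℕ} (l r : ℕ) (hr : r ≤ n) (v : ℝ) :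
    (∑ i : Fin n, if l ≤ (i:ℕ) ∧ (i:ℕ) < r then v else 0) = ((r - l : ℕ) : ℝ) * v := by
  rw [Fin.sum_univ_eq_sum_range (fun t => if l ≤ t ∧ t < r then v else 0) n]
  rw [Finset.sum_ite, Finset.sum_const, Finset.sum_const_zero, add_zero]
  have h : (Finset.range n).filter (fun t => l ≤ t ∧ t < r) = Finset.Ico l r := by
    ext t; simp only [Finset.mem_filter, Finset.mem_range, Finset.mem_Ico]; omega
  rw [h, Nat.card_Ico, nsmul_eq_mul]

lemma sum_ind2 {n : ℕ} (l r : ℕ) (hr : r ≤ n) (v : ℝ) (f : Fin n → ℝ)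
    (hf : ∀ i : Fin n, l ≤ (i:ℕ) → (i:ℕ) < r → f i = v) :
    (∑ i : Fin n, if l ≤ (i:ℕ) ∧ (i:ℕ) < r then f i else 0) = ((r - l : ℕ) : ℝ) * v := by
  rw [Finset.sum_congr rfl (fun i _ => ?_), sum_ind l r hr v]
  by_cases h : l ≤ (i:ℕ) ∧ (i:ℕ) < r
  · rw [if_pos h, if_pos h, hf i h.1 h.2]
  · rw [if_neg h, if_neg h]

lemma ind_split4 {n : ℕ} (a b c d e : ℕ) (hab : a ≤ b) (hbc : b ≤ c) (hcd : c ≤ d)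
    (hde : d ≤ e) (f : Fin n → ℝ) (i : Fin n) :
    (if a ≤ (i:ℕ) ∧ (i:ℕ) < e then f i else 0)
    = (if a ≤ (i:ℕ) ∧ (i:ℕ) < b then f i else 0) + (if b ≤ (i:ℕ) ∧ (i:ℕ) < c then f i else 0)
      + (if c ≤ (i:ℕ) ∧ (i:ℕ) < d then f i else 0) + (if d ≤ (i:ℕ) ∧ (i:ℕ) < e then f i else 0) := by
  split_ifs <;> first | omega | ring

lemma sum_if_lt {n k' : ℕ} (f : Fin n → ℝ) :
    (∑ i : Fin n, if (i:ℕ) < k' then f i else 0)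
    = ∑ i : Fin n, if 0 ≤ (i:ℕ) ∧ (i:ℕ) < k' then f i else 0 :=
  Finset.sum_congr rfl fun i _ => by
    rcases lt_or_ge (i:ℕ) k' with h|h
    · rw [if_pos h, if_pos ⟨Nat.zero_le _, h⟩]
    · rw [if_neg (by omega), if_neg (by omega)]

lemma sum_if_ge {n k' : ℕ} (f : Fin n → ℝ) :
    (∑ i : Fin n, if k' ≤ (i:ℕ) then f i else 0)
    = ∑ i : Fin n, if k' ≤ (i:ℕ) ∧ (i:ℕ) < n then f i else 0 :=
  Finset.sum_congr rfl fun i _ => by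
    rcases le_or_gt k' (i:ℕ) with h|h
    · rw [if_pos h, if_pos ⟨h, i.isLt⟩]
    · rw [if_neg (by omega), if_neg (by omega)]

lemma GgLt (k n p q : ℕ) (hp : k+1 ≤ p) (hpq : p < q) (hq : q < n) : Gg k n p q < Ngraph k n := by
  apply lt_of_le_of_ne (fun a b h => h.1)
  intro heq
  have hadj : (Ngraph k n).Adj ⟨p, lt_trans hpq hq⟩ ⟨q, hq⟩ :=
    ⟨fun h => absurd (congrArg Fin.val h) (by simp; omega), Or.inl ⟨hp, by simp; omega⟩⟩
  rw [← heq] at hadj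
  exact hadj.2.1 ⟨rfl, rfl⟩

lemma minDeg (k n p q : ℕ) (hn : 2*k+1 ≤ n) (hp : k+1 ≤ p) (hpq : p < q)
    (hexc : 2*k+1 ≤ q → 2*k+1 ≤ p) :
    k ≤ (Gg k n p q).minDegree := by
  haveI : Nonempty (Fin n) := ⟨⟨0, by omega⟩⟩
  apply SimpleGraph.le_minDegree_of_forall_le_degree
  intro v
  show k ≤ ((Gg k n p q).neighborFinset v).card
  by_cases h1 : (v:ℕ) < k+1
  · have hsub : (Finset.Ico (k+1) (2*k+1)).attachFin
        (fun m hm => by rw [Finset.mem_Ico] at hm; omega) ⊆ (Gg k n p q).neighborFinset v := by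
      intro w hw
      rw [Finset.mem_attachFin, Finset.mem_Ico] at hw
      rw [SimpleGraph.mem_neighborFinset]
      exact ⟨⟨fun h => absurd (congrArg Fin.val h) (by omega),
        Or.inr (Or.inl ⟨h1, hw.1, hw.2⟩)⟩,
        fun h => by omega, fun h => by omega⟩
    calc k = ((Finset.Ico (k+1) (2*k+1)).attachFin
          (fun m hm => by rw [Finset.mem_Ico] at hm; omega)).card := by
          rw [Finset.card_attachFin, Nat.card_Ico]; omega
      _ ≤ _ := Finset.card_le_card hsub
  · by_cases h2 : (v:ℕ) < 2*k+1
    · have hsub : (Finset.Ico 0 (k+1)).attachFin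
          (fun m hm => by rw [Finset.mem_Ico] at hm; omega) ⊆ (Gg k n p q).neighborFinset v := by
        intro w hw
        rw [Finset.mem_attachFin, Finset.mem_Ico] at hw
        rw [SimpleGraph.mem_neighborFinset]
        exact ⟨⟨fun h => absurd (congrArg Fin.val h) (by omega),
          Or.inr (Or.inr ⟨hw.2, by omega, h2⟩)⟩,
          fun h => by omega, fun h => by omega⟩
      calc k ≤ ((Finset.Ico 0 (k+1)).attachFin
            (fun m hm => by rw [Finset.mem_Ico] at hm; omega)).card := by
            rw [Finset.card_attachFin, Nat.card_Ico]; omega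
        _ ≤ _ := Finset.card_le_card hsub
    · have hsub : (Finset.Ico (k+1) (2*k+1)).attachFin
          (fun m hm => by rw [Finset.mem_Ico] at hm; omega) ⊆ (Gg k n p q).neighborFinset v := by
        intro w hw
        rw [Finset.mem_attachFin, Finset.mem_Ico] at hw
        rw [SimpleGraph.mem_neighborFinset]
        refine ⟨⟨fun h => absurd (congrArg Fin.val h) (by omega),
          Or.inl ⟨by omega, hw.1⟩⟩, fun h => by omega, ?_⟩
        rintro ⟨hvq, hwp⟩
        have := hexc (by omega)
        omega
      calc k = ((Finset.Ico (k+1) (2*k+1)).attachFin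
            (fun m hm => by rw [Finset.mem_Ico] at hm; omega)).card := by
            rw [Finset.card_attachFin, Nat.card_Ico]; omega
        _ ≤ _ := Finset.card_le_card hsub

open Matrix in
lemma iSup_eig_gt {m : ℕ} {A : Matrix (Fin m) (Fin m) ℝ} (hA : A.IsHermitian) {c : ℝ}
    {x : Fin m → ℝ} (hx : 0 < x ⬝ᵥ x) (h : c * (x ⬝ᵥ x) < x ⬝ᵥ (A *ᵥ x)) :
    c < ⨆ i, hA.eigenvalues i := by
  have h2 : c * (x ⬝ᵥ x) < (⨆ i, hA.eigenvalues i) * (x ⬝ᵥ x) :=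
    lt_of_lt_of_le h (rayleigh hA x)
  exact lt_of_mul_lt_mul_right (by linarith [h2]) (le_of_lt hx)

open Matrix in
lemma specRad_gt {n : ℕ} {G : SimpleGraph (Fin n)} (inst : DecidableRel G.Adj) {c : ℝ}
    {x : Fin n → ℝ} (hx : 0 < x ⬝ᵥ x)
    (h : c * (x ⬝ᵥ x) < x ⬝ᵥ ((@SimpleGraph.adjMatrix ℝ (Fin n) G inst _ _) *ᵥ x)) :
    c < specRad G := by
  unfold specRad
  rw [adjCongr G inst (Classical.decRel G.Adj)] at h
  exact iSup_eig_gt _ hx h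


set_option maxHeartbeats 1600000 in
/-- For `k ≥ 2` and `2k+1 ≤ n ≤ k³/2 + k²/2 + k + 2`, there is a proper
spanning subgraph of `N_k(n)` with minimum degree at least `k` and spectral
radius exceeding `n - k - 2`. -/
theorem stmt_16 (k n : ℕ) (hk : 2 ≤ k) (hn1 : 2 * k + 1 ≤ n)
    (hn2 : (n : ℝ) ≤ (k : ℝ) ^ 3 / 2 + (k : ℝ) ^ 2 / 2 + k + 2) :
    ∃ G : SimpleGraph (Fin n), ∃ _ : DecidableRel G.Adj,
      k ≤ G.minDegree ∧ G < Ngraph k n ∧ specRad G > (n : ℝ) - k - 2 := by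
  open Matrix in
  have hk' : (2:ℝ) ≤ (k:ℝ) := by exact_mod_cast hk
  have hn1' : 2*(k:ℝ)+1 ≤ (n:ℝ) := by exact_mod_cast hn1
  by_cases hsm : n ≤ 2*k+2
  · -- small case: remove the edge {k+1, k+2}
    refine ⟨Gg k n (k+1) (k+2), inferInstance,
      minDeg k n (k+1) (k+2) hn1 le_rfl (by omega) (fun h => absurd h (by omega)),
      GgLt k n (k+1) (k+2) le_rfl (by omega) (by omega), ?_⟩
    set x : Fin n → ℝ := fun _ => 1 with hxdef
    have hxx : x ⬝ᵥ x = (n:ℝ) := by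
      show (∑ i : Fin n, x i * x i) = (n:ℝ)
      simp [hxdef]
    refine specRad_gt inferInstance (x := x) ?_ ?_
    · rw [hxx]; linarith
    · rw [quadForm k n (k+1) (k+2) le_rfl (by omega) (by omega) x, hxx]
      have hSP : (∑ i : Fin n, if (i:ℕ) < k+1 then x i else 0) = (((k+1) - 0 : ℕ):ℝ) * 1 := by
        rw [sum_if_lt x]
        exact sum_ind2 0 (k+1) (by omega) 1 x (fun i _ _ => rfl)
      have hSQ : (∑ i : Fin n, if k+1 ≤ (i:ℕ) ∧ (i:ℕ) < 2*k+1 then x i else 0)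
          = ((2*k+1 - (k+1) : ℕ):ℝ) * 1 :=
        sum_ind2 (k+1) (2*k+1) (by omega) 1 x (fun i _ _ => rfl)
      have hSC : (∑ i : Fin n, if k+1 ≤ (i:ℕ) then x i else 0) = ((n - (k+1) : ℕ):ℝ) * 1 := by
        rw [sum_if_ge x]
        exact sum_ind2 (k+1) n le_rfl 1 x (fun i _ _ => rfl)
      have hTC : (∑ i : Fin n, if k+1 ≤ (i:ℕ) then (x i)^2 else 0) = ((n - (k+1) : ℕ):ℝ) * 1 := by
        rw [sum_if_ge (fun i => (x i)^2)]
        exact sum_ind2 (k+1) n le_rfl 1 (fun i => (x i)^2) (fun i _ _ => by norm_num [hxdef])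
      rw [hSP, hSQ, hSC, hTC]
      have c1 : (((k+1) - 0 : ℕ):ℝ) = (k:ℝ)+1 := by norm_num
      have c2 : ((2*k+1 - (k+1) : ℕ):ℝ) = (k:ℝ) := by
        rw [show 2*k+1-(k+1) = k from by omega]
      have c3 : ((n - (k+1) : ℕ):ℝ) = (n:ℝ) - ((k:ℝ)+1) := by
        rw [Nat.cast_sub (by omega)]; push_cast; ring
      rw [c1, c2, c3]
      have hsm' : (n:ℝ) ≤ 2*(k:ℝ)+2 := by exact_mod_cast hsm
      simp only [hxdef]
      nlinarith [mul_nonneg (by linarith : (0:ℝ) ≤ (k:ℝ)+1)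
        (by linarith : (0:ℝ) ≤ 2*(k:ℝ)+2-(n:ℝ))]
  · -- main case: n ≥ 2k+3, remove the edge {2k+1, 2k+2}
    refine ⟨Gg k n (2*k+1) (2*k+2), inferInstance,
      minDeg k n (2*k+1) (2*k+2) hn1 (by omega) (by omega) (fun _ => le_rfl),
      GgLt k n (2*k+1) (2*k+2) (by omega) (by omega) (by omega), ?_⟩
    have h23 : 2*k+3 ≤ n := by omega
    have h23' : 2*(k:ℝ)+3 ≤ (n:ℝ) := by exact_mod_cast h23
    set L : ℝ := (n:ℝ) - (k:ℝ) - 2 with hLdef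
    have hL1 : (k:ℝ)+1 ≤ L := by rw [hLdef]; linarith
    have hL0 : 0 < L := by linarith
    set a : ℝ := (k:ℝ) with hadef
    set d : ℝ := L - 1 with hddef
    set x : Fin n → ℝ := fun i =>
      if (i:ℕ) < k+1 then a else if (i:ℕ) < 2*k+1 then L else if (i:ℕ) < 2*k+3 then d else L
      with hxdef
    have hxP : ∀ i : Fin n, (i:ℕ) < k+1 → x i = a := fun i h => by
      simp only [hxdef]; rw [if_pos h]
    have hxQ : ∀ i : Fin n, k+1 ≤ (i:ℕ) → (i:ℕ) < 2*k+1 → x i = L := fun i h1 h2 => by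
      simp only [hxdef]; rw [if_neg (by omega), if_pos h2]
    have hxD : ∀ i : Fin n, 2*k+1 ≤ (i:ℕ) → (i:ℕ) < 2*k+3 → x i = d := fun i h1 h2 => by
      simp only [hxdef]; rw [if_neg (by omega), if_neg (by omega), if_pos h2]
    have hxS : ∀ i : Fin n, 2*k+3 ≤ (i:ℕ) → (i:ℕ) < n → x i = L := fun i h1 _ => by
      simp only [hxdef]; rw [if_neg (by omega), if_neg (by omega), if_neg (by omega)]
    have c1 : (((k+1) - 0 : ℕ):ℝ) = (k:ℝ)+1 := by norm_num
    have c2 : ((2*k+1 - (k+1) : ℕ):ℝ) = (k:ℝ) := by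
      rw [show 2*k+1-(k+1) = k from by omega]
    have c3 : ((2*k+3 - (2*k+1) : ℕ):ℝ) = 2 := by
      rw [show 2*k+3-(2*k+1) = 2 from by omega]; norm_num
    have c4 : ((n - (2*k+3) : ℕ):ℝ) = L - ((k:ℝ)+1) := by
      rw [Nat.cast_sub h23]; push_cast; rw [hLdef]; ring
    have c5 : ((n - n : ℕ):ℝ) = 0 := by simp
    have hSP : (∑ i : Fin n, if (i:ℕ) < k+1 then x i else 0) = ((k:ℝ)+1) * a := by
      rw [sum_if_lt x, sum_ind2 0 (k+1) (by omega) a x (fun i _ h => hxP i h), c1]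
    have hSQ : (∑ i : Fin n, if k+1 ≤ (i:ℕ) ∧ (i:ℕ) < 2*k+1 then x i else 0) = (k:ℝ)*L := by
      rw [sum_ind2 (k+1) (2*k+1) (by omega) L x (fun i h1 h2 => hxQ i h1 h2), c2]
    have sQd : (∑ i : Fin n, if 2*k+1 ≤ (i:ℕ) ∧ (i:ℕ) < 2*k+3 then x i else 0)
        = ((2*k+3-(2*k+1):ℕ):ℝ) * d :=
      sum_ind2 (2*k+1) (2*k+3) (by omega) d x (fun i h1 h2 => hxD i h1 h2)
    have sS1 : (∑ i : Fin n, if 2*k+3 ≤ (i:ℕ) ∧ (i:ℕ) < n then x i else 0)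
        = ((n-(2*k+3):ℕ):ℝ) * L :=
      sum_ind2 (2*k+3) n le_rfl L x (fun i h1 h2 => hxS i h1 h2)
    have sE : (∑ i : Fin n, if n ≤ (i:ℕ) ∧ (i:ℕ) < n then x i else 0) = ((n-n:ℕ):ℝ) * L :=
      sum_ind2 n n le_rfl L x (fun i h1 h2 => absurd h2 (by omega))
    have hSC : (∑ i : Fin n, if k+1 ≤ (i:ℕ) then x i else 0)
        = (k:ℝ)*L + 2*d + (L - ((k:ℝ)+1))*L := by
      rw [sum_if_ge x]
      have e2 : (∑ i : Fin n, if k+1 ≤ (i:ℕ) ∧ (i:ℕ) < n then x i else 0)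
          = ∑ i : Fin n, ((if k+1 ≤ (i:ℕ) ∧ (i:ℕ) < 2*k+1 then x i else 0)
            + (if 2*k+1 ≤ (i:ℕ) ∧ (i:ℕ) < 2*k+3 then x i else 0)
            + (if 2*k+3 ≤ (i:ℕ) ∧ (i:ℕ) < n then x i else 0)
            + (if n ≤ (i:ℕ) ∧ (i:ℕ) < n then x i else 0)) :=
        Finset.sum_congr rfl (fun i _ =>
          ind_split4 (k+1) (2*k+1) (2*k+3) n n (by omega) (by omega) h23 le_rfl x i)
      rw [e2, Finset.sum_add_distrib, Finset.sum_add_distrib, Finset.sum_add_distrib]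
      rw [sum_ind2 (k+1) (2*k+1) (by omega) L x (fun i h1 h2 => hxQ i h1 h2),
        sQd, sS1, sE, c2, c3, c4, c5]
      ring
    have hTC : (∑ i : Fin n, if k+1 ≤ (i:ℕ) then (x i)^2 else 0)
        = ((k:ℝ) + (L - ((k:ℝ)+1)))*L^2 + 2*d^2 := by
      rw [sum_if_ge (fun i => (x i)^2)]
      have e2 : (∑ i : Fin n, if k+1 ≤ (i:ℕ) ∧ (i:ℕ) < n then (x i)^2 else 0)
          = ∑ i : Fin n, ((if k+1 ≤ (i:ℕ) ∧ (i:ℕ) < 2*k+1 then (x i)^2 else 0)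
            + (if 2*k+1 ≤ (i:ℕ) ∧ (i:ℕ) < 2*k+3 then (x i)^2 else 0)
            + (if 2*k+3 ≤ (i:ℕ) ∧ (i:ℕ) < n then (x i)^2 else 0)
            + (if n ≤ (i:ℕ) ∧ (i:ℕ) < n then (x i)^2 else 0)) :=
        Finset.sum_congr rfl (fun i _ =>
          ind_split4 (k+1) (2*k+1) (2*k+3) n n (by omega) (by omega) h23 le_rfl
            (fun i => (x i)^2) i)
      rw [e2, Finset.sum_add_distrib, Finset.sum_add_distrib, Finset.sum_add_distrib]
      have t1 : (∑ i : Fin n, if k+1 ≤ (i:ℕ) ∧ (i:ℕ) < 2*k+1 then (x i)^2 else 0)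
          = ((2*k+1-(k+1):ℕ):ℝ) * L^2 :=
        sum_ind2 (k+1) (2*k+1) (by omega) (L^2) (fun i => (x i)^2)
          (fun i h1 h2 => by show x i ^ 2 = L^2; rw [hxQ i h1 h2])
      have t2 : (∑ i : Fin n, if 2*k+1 ≤ (i:ℕ) ∧ (i:ℕ) < 2*k+3 then (x i)^2 else 0)
          = ((2*k+3-(2*k+1):ℕ):ℝ) * d^2 :=
        sum_ind2 (2*k+1) (2*k+3) (by omega) (d^2) (fun i => (x i)^2)
          (fun i h1 h2 => by show x i ^ 2 = d ^ 2; rw [hxD i h1 h2])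
      have t3 : (∑ i : Fin n, if 2*k+3 ≤ (i:ℕ) ∧ (i:ℕ) < n then (x i)^2 else 0)
          = ((n-(2*k+3):ℕ):ℝ) * L^2 :=
        sum_ind2 (2*k+3) n le_rfl (L^2) (fun i => (x i)^2)
          (fun i h1 h2 => by show x i ^ 2 = L^2; rw [hxS i h1 h2])
      have t4 : (∑ i : Fin n, if n ≤ (i:ℕ) ∧ (i:ℕ) < n then (x i)^2 else 0)
          = ((n-n:ℕ):ℝ) * 1 :=
        sum_ind2 n n le_rfl 1 (fun i => (x i)^2) (fun i h1 h2 => absurd h2 (by omega))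
      rw [t1, t2, t3, t4, c2, c3, c4, c5]
      ring
    have hxx : x ⬝ᵥ x = ((k:ℝ)+1)*a^2 + (((k:ℝ) + (L - ((k:ℝ)+1)))*L^2 + 2*d^2) := by
      have h0 : x ⬝ᵥ x = ∑ i : Fin n, (if 0 ≤ (i:ℕ) ∧ (i:ℕ) < n then x i * x i else 0) :=
        Finset.sum_congr rfl (fun i _ => (if_pos ⟨Nat.zero_le _, i.isLt⟩).symm)
      rw [h0]
      have e2 : (∑ i : Fin n, if 0 ≤ (i:ℕ) ∧ (i:ℕ) < n then x i * x i else 0)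
          = ∑ i : Fin n, ((if 0 ≤ (i:ℕ) ∧ (i:ℕ) < k+1 then x i * x i else 0)
            + (if k+1 ≤ (i:ℕ) ∧ (i:ℕ) < 2*k+1 then x i * x i else 0)
            + (if 2*k+1 ≤ (i:ℕ) ∧ (i:ℕ) < 2*k+3 then x i * x i else 0)
            + (if 2*k+3 ≤ (i:ℕ) ∧ (i:ℕ) < n then x i * x i else 0)) :=
        Finset.sum_congr rfl (fun i _ =>
          ind_split4 0 (k+1) (2*k+1) (2*k+3) n (by omega) (by omega) (by omega) h23
            (fun i => x i * x i) i)
      rw [e2, Finset.sum_add_distrib, Finset.sum_add_distrib, Finset.sum_add_distrib]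
      have t0 : (∑ i : Fin n, if 0 ≤ (i:ℕ) ∧ (i:ℕ) < k+1 then x i * x i else 0)
          = (((k+1)-0:ℕ):ℝ) * a^2 :=
        sum_ind2 0 (k+1) (by omega) (a^2) (fun i => x i * x i)
          (fun i _ h2 => by show x i * x i = a ^ 2; rw [hxP i h2]; ring)
      have t1 : (∑ i : Fin n, if k+1 ≤ (i:ℕ) ∧ (i:ℕ) < 2*k+1 then x i * x i else 0)
          = ((2*k+1-(k+1):ℕ):ℝ) * L^2 :=
        sum_ind2 (k+1) (2*k+1) (by omega) (L^2) (fun i => x i * x i)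
          (fun i h1 h2 => by show x i * x i = L^2; rw [hxQ i h1 h2]; ring)
      have t2 : (∑ i : Fin n, if 2*k+1 ≤ (i:ℕ) ∧ (i:ℕ) < 2*k+3 then x i * x i else 0)
          = ((2*k+3-(2*k+1):ℕ):ℝ) * d^2 :=
        sum_ind2 (2*k+1) (2*k+3) (by omega) (d^2) (fun i => x i * x i)
          (fun i h1 h2 => by show x i * x i = d ^ 2; rw [hxD i h1 h2]; ring)
      have t3 : (∑ i : Fin n, if 2*k+3 ≤ (i:ℕ) ∧ (i:ℕ) < n then x i * x i else 0)
          = ((n-(2*k+3):ℕ):ℝ) * L^2 :=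
        sum_ind2 (2*k+3) n le_rfl (L^2) (fun i => x i * x i)
          (fun i h1 h2 => by show x i * x i = L^2; rw [hxS i h1 h2]; ring)
      rw [t0, t1, t2, t3, c1, c2, c3, c4]
      ring
    have hxp : ∀ (h : 2*k+1 < n), x ⟨2*k+1, h⟩ = d := fun h =>
      hxD _ le_rfl (by show 2*k+1 < 2*k+3; omega)
    have hxq : ∀ (h : 2*k+2 < n), x ⟨2*k+2, h⟩ = d := fun h =>
      hxD _ (by show 2*k+1 ≤ 2*k+2; omega) (by show 2*k+2 < 2*k+3; omega)
    refine specRad_gt inferInstance (x := x) ?_ ?_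
    · rw [hxx]
      have p1 : 0 < ((k:ℝ)+1)*a^2 := by rw [hadef]; nlinarith
      have p2 : 0 ≤ ((k:ℝ) + (L - ((k:ℝ)+1)))*L^2 := mul_nonneg (by linarith) (sq_nonneg L)
      have p3 : 0 ≤ d^2 := sq_nonneg d
      linarith
    · rw [quadForm k n (2*k+1) (2*k+2) (by omega) (by omega) (by omega) x,
        hSP, hSQ, hSC, hTC, hxx, hxp, hxq]
      rw [← sub_pos]
      have hup : 2*L ≤ (k:ℝ)^2*((k:ℝ)+1) := by
        have h3 : (k:ℝ)^2*((k:ℝ)+1) = (k:ℝ)^3+(k:ℝ)^2 := by ring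
        rw [hLdef]; linarith [hn2]
      have hpos : 0 < L * ((k:ℝ)^2*((k:ℝ)+1) + 2 - 2*L) := mul_pos hL0 (by linarith)
      refine lt_of_lt_of_eq hpos ?_
      rw [hadef, hddef]
      ring
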